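/- If a separable metrizable space X is a union of fewer than 𝔟 many Hurewicz subspaces, then X is Hurewicz, where 𝔟 is the minimal cardinality of a subset of ω^ω unbounded with respect to eventual domination ≤*. -/

import Mathlib

def IsHurewicz (X : Type*) [TopologicalSpace X] : Prop :=
  ∀ U : ℕ → Set (Set X),
    (∀ n, ∀ V ∈ U n, IsOpen V) → (∀ n, ⋃₀ U n = Set.univ) →
    ∃ V : ℕ → Set (Set X),
      (∀ n, V n ⊆ U n ∧ (V n).Finite) ∧
      ∀ x : X, ∀ᶠ n in Filter.atTop, x ∈ ⋃₀ V n

/-- The bounding number \`𝔟\`: the least cardinality of a family in \`ℕ → ℕ\`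
with no upper bound with respect to eventual domination. -/
noncomputable def bCardinal : Cardinal :=
  sInf { c : Cardinal |
    ∃ F : Set (ℕ → ℕ), Cardinal.mk F = c ∧
      ∀ g : ℕ → ℕ, ∃ f ∈ F, ¬ ∀ᶠ n in Filter.atTop, f n ≤ g n }

lemma bounded_of_lt_b {ι : Type} (hι : Cardinal.mk ι < bCardinal) (f : ι → ℕ → ℕ) :
    ∃ g : ℕ → ℕ, ∀ i, ∀ᶠ n in Filter.atTop, f i n ≤ g n := by
  by_contra h
  push_neg at h
  have hmem : Cardinal.mk (Set.range f) ∈ { c : Cardinal |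
      ∃ F : Set (ℕ → ℕ), Cardinal.mk F = c ∧
        ∀ g : ℕ → ℕ, ∃ f ∈ F, ¬ ∀ᶠ n in Filter.atTop, f n ≤ g n } := by
    refine ⟨Set.range f, rfl, fun g => ?_⟩
    obtain ⟨i, hi⟩ := h g
    exact ⟨f i, Set.mem_range_self i,
      Filter.not_eventually.2 (hi.mono fun n hn => not_le.2 hn)⟩
  have h1 : bCardinal ≤ Cardinal.mk (Set.range f) := csInf_le' hmem
  have h2 : Cardinal.mk (Set.range f) ≤ Cardinal.mk ι := Cardinal.mk_range_le
  exact absurd hι (not_lt.2 (h1.trans h2))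

theorem union_lt_b_hurewicz (X : Type*) [TopologicalSpace X]
    [TopologicalSpace.MetrizableSpace X] [TopologicalSpace.SeparableSpace X]
    (ι : Type) (hι : Cardinal.mk ι < bCardinal) (S : ι → Set X)
    (hH : ∀ i, IsHurewicz (S i)) (hcov : ⋃ i, S i = Set.univ) :
    IsHurewicz X := by
  classical
  rcases isEmpty_or_nonempty X with h | hne
  · intro U _ _
    exact ⟨fun _ => ∅, fun n => ⟨Set.empty_subset _, Set.finite_empty⟩,
      fun x => (h.false x).elim⟩
  · letI : MetricSpace X := TopologicalSpace.metrizableSpaceMetric X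
    haveI : SecondCountableTopology X := UniformSpace.secondCountable_of_separable X
    intro U hopen hcov'
    have hT : ∀ n, ∃ e : ℕ → Set X, (∀ k, e k ∈ U n) ∧ ⋃ k, e k = Set.univ := by
      intro n
      obtain ⟨T, hTc, hTU, hTeq⟩ := TopologicalSpace.isOpen_sUnion_countable (U n) (hopen n)
      rw [hcov' n] at hTeq
      have hTne : T.Nonempty := by
        by_contra hTe
        rw [Set.not_nonempty_iff_eq_empty] at hTe
        rw [hTe, Set.sUnion_empty] at hTeq
        obtain ⟨x⟩ := hne
        exact (hTeq ▸ Set.mem_univ x : x ∈ (∅ : Set X))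
      obtain ⟨e, he⟩ := hTc.exists_eq_range hTne
      refine ⟨e, fun k => hTU (he ▸ Set.mem_range_self k), ?_⟩
      rw [← Set.sUnion_range, ← he, hTeq]
    choose e heU hecov using hT
    have key : ∀ i : ι, ∃ V : ℕ → Set (Set (S i)),
        (∀ n, V n ⊆ (fun A => (Subtype.val ⁻¹' A : Set (S i))) '' Set.range (e n)
          ∧ (V n).Finite) ∧
        ∀ y : S i, ∀ᶠ n in Filter.atTop, y ∈ ⋃₀ V n := by
      intro i
      refine hH i (fun n => (fun A => (Subtype.val ⁻¹' A : Set (S i))) '' Set.range (e n))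
        ?_ ?_
      · rintro n A ⟨B, ⟨k, rfl⟩, rfl⟩
        exact (hopen n _ (heU n k)).preimage continuous_subtype_val
      · intro n
        ext y
        simp only [Set.mem_sUnion, Set.mem_univ, iff_true]
        have hy : (y : X) ∈ ⋃ k, e n k := by rw [hecov n]; trivial
        obtain ⟨_, ⟨k, rfl⟩, hk⟩ := hy
        exact ⟨_, ⟨e n k, ⟨k, rfl⟩, rfl⟩, hk⟩
    choose V hVsub hVγ using key
    let f : ι → ℕ → ℕ := fun i n =>
      (hVsub i n).2.toFinset.sup fun W =>
        if h : ∃ k, (Subtype.val ⁻¹' e n k : Set (S i)) = W then h.choose else 0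
    have hf : ∀ i n, ∀ W ∈ V i n, ∃ k ≤ f i n,
        (Subtype.val ⁻¹' e n k : Set (S i)) = W := by
      intro i n W hW
      have hex : ∃ k, (Subtype.val ⁻¹' e n k : Set (S i)) = W := by
        obtain ⟨B, ⟨k, rfl⟩, h2⟩ := (hVsub i n).1 hW
        exact ⟨k, h2⟩
      refine ⟨hex.choose, ?_, hex.choose_spec⟩
      have hle := Finset.le_sup (f := fun W =>
          if h : ∃ k, (Subtype.val ⁻¹' e n k : Set (S i)) = W then h.choose else 0)
        ((hVsub i n).2.mem_toFinset.2 hW)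
      simpa [f, dif_pos hex] using hle
    obtain ⟨g, hg⟩ := bounded_of_lt_b hι f
    refine ⟨fun n => e n '' Set.Iic (g n),
      fun n => ⟨?_, (Set.finite_Iic _).image _⟩, ?_⟩
    · rintro A ⟨k, _, rfl⟩; exact heU n k
    · intro x
      have hx : x ∈ ⋃ i, S i := hcov ▸ Set.mem_univ x
      obtain ⟨_, ⟨i, rfl⟩, hxS⟩ := hx
      filter_upwards [hVγ i ⟨x, hxS⟩, hg i] with n hn hfg
      obtain ⟨W, hW, hxW⟩ := hn
      obtain ⟨k, hk, rfl⟩ := hf i n W hW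
      exact ⟨e n k, ⟨k, hk.trans hfg, rfl⟩, hxW⟩
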